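/- Let W = (−1/2, 1/2]^k and let Λ ⊂ ℝ^k be a lattice of covolume 1 such that the density D_c(W + Λ) is at least 1/ℓ. Then for every collection of vectors v₁, …, v_ℓ ∈ ℝ^k there exist indices i ≠ i' in {1,…,ℓ} such that D_c((W + Λ + v_i) ∩ (W + Λ + v_{i'})) ≥ 2(ℓ·D_c(W + Λ) − 1)/(ℓ(ℓ−1)). -/

import Mathlib

open MeasureTheory

open Pointwise ENNReal

lemma nat_ie (m : ℕ) : 2 * m ≤ 2 + (m * m - m) := by
  rcases m with _ | _ | n
  · simp
  · simp
  · have h : (n+2) * (n+2) - (n+2) = (n+2) * (n+1) := by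
      have : (n+2) * (n+2) = (n+2) * (n+1) + (n+2) := by ring
      omega
    rw [h]; nlinarith

lemma pointwise_ie {α : Type*} {ℓ : ℕ} (A : Fin ℓ → Set α) (x : α) :
    2 * ∑ i, (A i).indicator (1 : α → ℝ≥0∞) x
      ≤ 2 + ∑ p ∈ (Finset.univ : Finset (Fin ℓ)).offDiag,
          (A p.1 ∩ A p.2).indicator (1 : α → ℝ≥0∞) x := by
  classical
  set S := Finset.univ.filter fun i => x ∈ A i with hS
  have h1 : ∑ i, (A i).indicator (1 : α → ℝ≥0∞) x = (S.card : ℝ≥0∞) := by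
    simp only [Set.indicator_apply, Pi.one_apply]
    rw [Finset.sum_boole, hS]
  have h2 : ∑ p ∈ (Finset.univ : Finset (Fin ℓ)).offDiag,
      (A p.1 ∩ A p.2).indicator (1 : α → ℝ≥0∞) x = (S.offDiag.card : ℝ≥0∞) := by
    simp only [Set.indicator_apply, Pi.one_apply, Set.mem_inter_iff]
    rw [Finset.sum_boole]
    congr 2
    ext p
    simp [Finset.mem_offDiag, hS, and_comm, and_left_comm]
  rw [h1, h2, Finset.offDiag_card]
  calc 2 * (S.card : ℝ≥0∞) = ((2 * S.card : ℕ) : ℝ≥0∞) := by push_cast; ring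
    _ ≤ ((2 + (S.card * S.card - S.card) : ℕ) : ℝ≥0∞) := Nat.cast_le.mpr (nat_ie _)
    _ = 2 + ((S.card * S.card - S.card : ℕ) : ℝ≥0∞) := by push_cast; ring

lemma incl_excl {α : Type*} [MeasurableSpace α] (μ : Measure α) {ℓ : ℕ} (A : Fin ℓ → Set α)
    (hA : ∀ i, MeasurableSet (A i)) {F : Set α} (hFm : MeasurableSet F) :
    2 * ∑ i, μ (A i ∩ F) ≤ 2 * μ F +
      ∑ p ∈ (Finset.univ : Finset (Fin ℓ)).offDiag, μ (A p.1 ∩ A p.2 ∩ F) := by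
  have key : ∀ (S : Set α), MeasurableSet S →
      μ (S ∩ F) = ∫⁻ x, S.indicator 1 x ∂(μ.restrict F) := by
    intro S hS
    rw [lintegral_indicator_one hS, Measure.restrict_apply hS]
  calc 2 * ∑ i, μ (A i ∩ F)
      = ∫⁻ x, 2 * ∑ i, (A i).indicator 1 x ∂(μ.restrict F) := by
        rw [lintegral_const_mul]
        · rw [lintegral_finset_sum]
          · simp_rw [← key _ (hA _)]
          · exact fun i _ => measurable_const.indicator (hA i)
        · exact Finset.measurable_sum _ fun i _ => measurable_const.indicator (hA i)
    _ ≤ ∫⁻ x, (2 + ∑ p ∈ (Finset.univ : Finset (Fin ℓ)).offDiag,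
          (A p.1 ∩ A p.2).indicator 1 x) ∂(μ.restrict F) := lintegral_mono fun x => pointwise_ie A x
    _ = 2 * μ F + ∑ p ∈ (Finset.univ : Finset (Fin ℓ)).offDiag, μ (A p.1 ∩ A p.2 ∩ F) := by
        rw [lintegral_add_left measurable_const, lintegral_finset_sum]
        · rw [lintegral_const]
          simp_rw [← key _ ((hA _).inter (hA _))]
          rw [Measure.restrict_apply_univ, two_mul, ← two_mul]
        · exact fun p _ => measurable_const.indicator ((hA p.1).inter (hA p.2))

open MeasureTheory Pointwise ENNReal

/-- The set `W + Λ`, where `W = (−1/2, 1/2]^k`. -/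
def cubeLat (k : ℕ) (Λ : AddSubgroup (Fin k → ℝ)) : Set (Fin k → ℝ) :=
  {x | ∃ w l : Fin k → ℝ, (∀ i, -(1/2 : ℝ) < w i ∧ w i ≤ 1/2) ∧ l ∈ Λ ∧ x = w + l}

lemma cubeLat_add_mem {k : ℕ} {Λ : AddSubgroup (Fin k → ℝ)} {x l : Fin k → ℝ}
    (hl : l ∈ Λ) (hx : x ∈ cubeLat k Λ) : x + l ∈ cubeLat k Λ := by
  obtain ⟨w, l', hw, hl', rfl⟩ := hx
  exact ⟨w, l' + l, hw, add_mem hl' hl, by abel⟩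

lemma cubeLat_add_iff {k : ℕ} {Λ : AddSubgroup (Fin k → ℝ)} {x l : Fin k → ℝ}
    (hl : l ∈ Λ) : x + l ∈ cubeLat k Λ ↔ x ∈ cubeLat k Λ := by
  constructor
  · intro h
    have := cubeLat_add_mem (neg_mem hl) h
    simpa using this
  · exact cubeLat_add_mem hl

lemma cubeLat_measurable {k : ℕ} {Λ : AddSubgroup (Fin k → ℝ)} [Countable Λ] :
    MeasurableSet (cubeLat k Λ) := by
  have hW : MeasurableSet {w : Fin k → ℝ | ∀ i, -(1/2 : ℝ) < w i ∧ w i ≤ 1/2} := by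
    have : {w : Fin k → ℝ | ∀ i, -(1/2 : ℝ) < w i ∧ w i ≤ 1/2}
        = Set.univ.pi fun _ => Set.Ioc (-(1/2 : ℝ)) (1/2) := by
      ext w; simp [Set.mem_pi, Set.mem_Ioc]
    rw [this]
    exact MeasurableSet.univ_pi fun i => measurableSet_Ioc
  have : cubeLat k Λ = ⋃ l : Λ, (fun x => x - (l : Fin k → ℝ)) ⁻¹'
      {w : Fin k → ℝ | ∀ i, -(1/2 : ℝ) < w i ∧ w i ≤ 1/2} := by
    ext x
    simp only [Set.mem_iUnion, Set.mem_preimage, Set.mem_setOf_eq, cubeLat]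
    constructor
    · rintro ⟨w, l, hw, hl, rfl⟩
      exact ⟨⟨l, hl⟩, by simpa using hw⟩
    · rintro ⟨⟨l, hl⟩, h⟩
      exact ⟨x - l, l, h, hl, by abel⟩
  rw [this]
  exact MeasurableSet.iUnion fun l =>
    (measurable_id.sub measurable_const) hW

lemma cubeLat_density_eq (k : ℕ) (Λ : AddSubgroup (Fin k → ℝ)) [Countable Λ]
    (F : Set (Fin k → ℝ)) (hF : IsAddFundamentalDomain Λ F volume) (u : Fin k → ℝ) :
    volume ({x | x - u ∈ cubeLat k Λ} ∩ F) = volume (cubeLat k Λ ∩ F) := by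
  have hinv : ∀ g : Λ, (fun x => g +ᵥ x) ⁻¹' cubeLat k Λ = cubeLat k Λ := by
    intro g; ext x
    simp only [Set.mem_preimage]
    have hgx : g +ᵥ x = x + (g : Fin k → ℝ) := by
      show (g : Fin k → ℝ) + x = x + (g : Fin k → ℝ)
      abel
    rw [hgx, cubeLat_add_iff g.2]
  have h1 : (-u) +ᵥ ({x | x - u ∈ cubeLat k Λ} ∩ F) = cubeLat k Λ ∩ ((-u) +ᵥ F) := by
    rw [Set.vadd_set_inter]
    congr 1
    ext x
    rw [Set.mem_vadd_set_iff_neg_vadd_mem]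
    simp only [neg_neg, vadd_eq_add, Set.mem_setOf_eq]
    rw [show u + x - u = x by abel]
  calc volume ({x | x - u ∈ cubeLat k Λ} ∩ F)
      = volume ((-u) +ᵥ ({x | x - u ∈ cubeLat k Λ} ∩ F)) := (measure_vadd volume _ _).symm
    _ = volume (cubeLat k Λ ∩ ((-u) +ᵥ F)) := by rw [h1]
    _ = volume (cubeLat k Λ ∩ F) :=
        (hF.vadd_of_comm (-u)).measure_set_eq hF cubeLat_measurable hinv
/-- if `Λ ⊂ ℝ^k` is a lattice of covolume 1 (given by a fundamental
domain `F` of volume 1) and the density `D_c(W + Λ) = volume((W + Λ) ∩ F)` is at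
least `1/ℓ`, then for every `v₁,…,v_ℓ ∈ ℝ^k` there are `i ≠ i'` with
`D_c((W + Λ + v_i) ∩ (W + Λ + v_{i'})) ≥ 2(ℓ·D_c(W+Λ) − 1)/(ℓ(ℓ−1))`. -/
theorem stmt5 (k ℓ : ℕ) (hℓ : 2 ≤ ℓ)
    (Λ : AddSubgroup (Fin k → ℝ)) (F : Set (Fin k → ℝ))
    (hF : IsAddFundamentalDomain Λ F volume) (hcov : volume F = 1)
    (hdens : 1 / (ℓ : ENNReal) ≤ volume (cubeLat k Λ ∩ F)) :
    ∀ v : Fin ℓ → (Fin k → ℝ), ∃ i i' : Fin ℓ, i ≠ i' ∧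
      2 * ((ℓ : ENNReal) * volume (cubeLat k Λ ∩ F) - 1) / ((ℓ : ENNReal) * ((ℓ : ENNReal) - 1))
        ≤ volume ({x | x - v i ∈ cubeLat k Λ ∧ x - v i' ∈ cubeLat k Λ} ∩ F) := by
  intro v
  classical
  -- Λ is countable
  haveI : Countable Λ := by
    have hnm : ∀ l : Λ, NullMeasurableSet (l +ᵥ F) volume := fun l =>
      hF.nullMeasurableSet_vadd l
    have hpos : ∀ l : Λ, 0 < volume (l +ᵥ F) := by
      intro l
      have h1 : (l +ᵥ F : Set (Fin k → ℝ)) = (l : Fin k → ℝ) +ᵥ F := rfl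
      rw [h1, measure_vadd, hcov]
      norm_num
    have hcnt := Measure.countable_meas_pos_of_disjoint_iUnion₀
      (μ := (volume : Measure (Fin k → ℝ))) hnm hF.aedisjoint
    have huniv : {l : Λ | 0 < volume (l +ᵥ F)} = Set.univ := Set.eq_univ_of_forall hpos
    rw [huniv] at hcnt
    exact Set.countable_univ_iff.mp hcnt
  set d := volume (cubeLat k Λ ∩ F) with hd
  -- a measurable version of F
  obtain ⟨F₀, hsub, hF₀m, hF₀ae⟩ := hF.nullMeasurableSet.exists_measurable_subset_ae_eq
  have hFF₀ : ∀ S : Set (Fin k → ℝ), volume (S ∩ F) = volume (S ∩ F₀) := fun S =>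
    measure_congr (ae_eq_set_inter Filter.EventuallyEq.rfl hF₀ae.symm)
  have hvol₀ : volume F₀ = 1 := (measure_congr hF₀ae).trans hcov
  set A : Fin ℓ → Set (Fin k → ℝ) := fun i => {x | x - v i ∈ cubeLat k Λ} with hA
  have hAm : ∀ i, MeasurableSet (A i) := fun i =>
    (measurable_id.sub measurable_const) cubeLat_measurable
  have hsum : ∑ i, volume (A i ∩ F₀) = (ℓ : ℝ≥0∞) * d := by
    have h : ∀ i : Fin ℓ, volume (A i ∩ F₀) = d := fun i => by
      rw [← hFF₀]; exact cubeLat_density_eq k Λ F hF (v i)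
    rw [Finset.sum_congr rfl fun i _ => h i, Finset.sum_const, Finset.card_univ,
      Fintype.card_fin, nsmul_eq_mul]
  have hie := incl_excl volume A hAm hF₀m
  rw [hsum, hvol₀, mul_one] at hie
  -- pick the maximal pair
  have hne : ((Finset.univ : Finset (Fin ℓ)).offDiag).Nonempty := by
    refine ⟨(⟨0, by omega⟩, ⟨1, by omega⟩), ?_⟩
    simp [Finset.mem_offDiag, Fin.ext_iff]
  obtain ⟨p, hp, hmax⟩ := Finset.exists_max_image
    ((Finset.univ : Finset (Fin ℓ)).offDiag)
    (fun p => volume (A p.1 ∩ A p.2 ∩ F₀)) hne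
  set M := volume (A p.1 ∩ A p.2 ∩ F₀) with hM
  set N : ℕ := ℓ * ℓ - ℓ with hN
  have hsum2 : ∑ q ∈ (Finset.univ : Finset (Fin ℓ)).offDiag,
      volume (A q.1 ∩ A q.2 ∩ F₀) ≤ (N : ℝ≥0∞) * M := by
    calc ∑ q ∈ (Finset.univ : Finset (Fin ℓ)).offDiag, volume (A q.1 ∩ A q.2 ∩ F₀)
        ≤ ((Finset.univ : Finset (Fin ℓ)).offDiag).card • M :=
          Finset.sum_le_card_nsmul _ _ M fun q hq => hmax q hq
      _ = (N : ℝ≥0∞) * M := by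
          rw [Finset.offDiag_card, Finset.card_univ, Fintype.card_fin, nsmul_eq_mul]
  have hmain : 2 * ((ℓ : ℝ≥0∞) * d) ≤ 2 + (N : ℝ≥0∞) * M :=
    hie.trans (add_le_add_right hsum2 2)
  refine ⟨p.1, p.2, (Finset.mem_offDiag.mp hp).2.2, ?_⟩
  have hset : {x | x - v p.1 ∈ cubeLat k Λ ∧ x - v p.2 ∈ cubeLat k Λ} = A p.1 ∩ A p.2 := rfl
  rw [hset, hFF₀, ← hM]
  have hD : (ℓ : ℝ≥0∞) * ((ℓ : ℝ≥0∞) - 1) = (N : ℝ≥0∞) := by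
    rw [hN, ENNReal.natCast_sub, Nat.cast_mul,
      ENNReal.mul_sub fun _ _ => natCast_ne_top ℓ, mul_one]
  have hN2 : 2 ≤ N := by
    have h1 : 2 * ℓ ≤ ℓ * ℓ := by nlinarith
    omega
  have hD0 : (N : ℝ≥0∞) ≠ 0 := by
    simp only [ne_eq, Nat.cast_eq_zero]
    omega
  rw [hD, ENNReal.div_le_iff hD0 (natCast_ne_top N)]
  have h2 : 2 * ((ℓ : ℝ≥0∞) * d - 1) = 2 * ((ℓ : ℝ≥0∞) * d) - 2 := by
    rw [ENNReal.mul_sub fun _ _ => ENNReal.ofNat_ne_top, mul_one]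
  rw [h2, tsub_le_iff_right]
  calc 2 * ((ℓ : ℝ≥0∞) * d) ≤ 2 + (N : ℝ≥0∞) * M := hmain
    _ = M * (N : ℝ≥0∞) + 2 := by ring
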